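/- Let (A i)_{i ∈ I} be a family of (not necessarily unital) complex star algebras, H a complex Hilbert space, n a natural number, and let F : (Π i, A i) → B(H) be a (not necessarily unital) star-algebra homomorphism from the product star algebra (pointwise operations) such that for every a ∈ Π i, A i the range of F(a) is contained in a subspace of H of dimension at most n. Then the set of indices i ∈ I for which there exists a ∈ A i with F(single i a) ≠ 0 has at most n elements; here single i a denotes the element of the product that is a in coordinate i and 0 elsewhere. -/

import Mathlib

set_option maxHeartbeats 1000000


/-- If `F` is a star-algebra homomorphism from a product of complex star algebras
`Π i, A i` to `B(H)` all of whose values have rank at most `n`, then the set of indices `i` such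
that `F` is nonzero on some element supported at coordinate `i` has at most `n` elements. -/
theorem stmt4
    {I : Type*} [DecidableEq I] (A : I → Type*)
    [∀ i, NonUnitalRing (A i)] [∀ i, Module ℂ (A i)] [∀ i, StarRing (A i)]
    [∀ i, StarModule ℂ (A i)]
    {H : Type*} [NormedAddCommGroup H] [InnerProductSpace ℂ H] [CompleteSpace H]
    (n : ℕ)
    (F : (∀ i, A i) →⋆ₙₐ[ℂ] (H →L[ℂ] H))
    (hF : ∀ a : ∀ i, A i, ∃ V : Submodule ℂ H, FiniteDimensional ℂ V ∧
      Module.finrank ℂ V ≤ n ∧ LinearMap.range ((F a) : H →ₗ[ℂ] H) ≤ V) :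
    {i : I | ∃ a : A i, F (Pi.single i a) ≠ 0}.Finite ∧
      {i : I | ∃ a : A i, F (Pi.single i a) ≠ 0}.ncard ≤ n := by
  classical
  set s := {i : I | ∃ a : A i, F (Pi.single i a) ≠ 0} with hs
  -- products of singles at different coordinates vanish
  have hsingle : ∀ (i j : I), i ≠ j → ∀ (x : A i) (y : A j),
      (Pi.single i x : ∀ k, A k) * Pi.single j y = 0 := by
    intro i j hij x y
    funext k
    simp only [Pi.mul_apply, Pi.zero_apply]
    rcases eq_or_ne k i with rfl | hk
    · rw [Pi.single_eq_of_ne hij, mul_zero]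
    · rw [Pi.single_eq_of_ne hk, zero_mul]
  have hzero : ∀ (i j : I), i ≠ j → ∀ (x : A i) (y : A j),
      F (Pi.single i x) * F (Pi.single j y) = 0 := by
    intro i j hij x y
    rw [← map_mul, hsingle i j hij, map_zero]
  -- key cardinality bound for finite subsets of s
  have key : ∀ t : Finset I, ↑t ⊆ s → t.card ≤ n := by
    intro t ht
    choose c hc using fun (i : t) => ht i.2
    set T : t → (H →L[ℂ] H) := fun i => F (Pi.single (i : I) (c i)) with hT
    have hadj : ∀ i : t, ContinuousLinearMap.adjoint (T i)
        = F (Pi.single (i : I) (star (c i))) := by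
      intro i
      rw [← ContinuousLinearMap.star_eq_adjoint, hT, ← map_star, ← Pi.single_star]
    set a : ∀ i, A i := ∑ i : t, Pi.single (i : I) (c i) with ha
    obtain ⟨V, hVfin, hVrank, hVrange⟩ := hF a
    have hFa : F a = ∑ i : t, T i := by rw [ha, map_sum]
    -- pick w i with T i (T i† w i) ≠ 0
    have hw : ∀ i : t, ∃ w : H, T i (ContinuousLinearMap.adjoint (T i) w) ≠ 0 := by
      intro i
      by_contra h
      push_neg at h
      apply hc i
      have hadj0 : ContinuousLinearMap.adjoint (T i) = 0 := by
        ext w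
        have h1 : (inner ℂ (ContinuousLinearMap.adjoint (T i) w)
            (ContinuousLinearMap.adjoint (T i) w) : ℂ) = 0 := by
          rw [ContinuousLinearMap.adjoint_inner_left, h w, inner_zero_right]
        simpa using inner_self_eq_zero.mp h1
      have := congrArg ContinuousLinearMap.adjoint hadj0
      rwa [ContinuousLinearMap.adjoint_adjoint, map_zero] at this
    choose w hwne using hw
    set u : t → H := fun i => T i (ContinuousLinearMap.adjoint (T i) (w i)) with hu
    -- u i lies in V
    have humem : ∀ i : t, u i ∈ V := by
      intro i
      apply hVrange
      refine ⟨ContinuousLinearMap.adjoint (T i) (w i), ?_⟩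
      have : F a (ContinuousLinearMap.adjoint (T i) (w i)) = u i := by
        rw [hFa]
        rw [ContinuousLinearMap.sum_apply]
        rw [Finset.sum_eq_single_of_mem i (Finset.mem_univ i)]
        intro j _ hji
        have : T j * ContinuousLinearMap.adjoint (T i) = 0 := by
          rw [hadj i]
          exact hzero _ _ (fun hh => hji (Subtype.ext hh)) _ _
        have := congrFun (congrArg (fun (L : H →L[ℂ] H) => (L : H → H)) this) (w i)
        simpa using this
      exact this
    -- u i are pairwise orthogonal
    have horth : Pairwise fun i j : t => (inner ℂ (u i) (u j) : ℂ) = 0 := by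
      intro i j hij
      have hmul : ContinuousLinearMap.adjoint (T j) * T i = 0 := by
        rw [hadj j]
        exact hzero _ _ (fun hh => hij (Subtype.ext hh.symm)) _ _
      have h0 : ContinuousLinearMap.adjoint (T j) (u i) = 0 := by
        have := congrFun (congrArg (fun (L : H →L[ℂ] H) => (L : H → H)) hmul)
          (ContinuousLinearMap.adjoint (T i) (w i))
        simpa [hu] using this
      calc (inner ℂ (u i) (u j) : ℂ)
          = inner ℂ (ContinuousLinearMap.adjoint (T j) (u i))
              (ContinuousLinearMap.adjoint (T j) (w j)) :=
            (ContinuousLinearMap.adjoint_inner_left (T j) (ContinuousLinearMap.adjoint (T j) (w j)) (u i)).symm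
        _ = 0 := by rw [h0, inner_zero_left]
    -- linear independence in V
    have hli : LinearIndependent ℂ u :=
      linearIndependent_of_ne_zero_of_inner_eq_zero hwne horth
    have hcomp : V.subtype ∘ (fun i : t => (⟨u i, humem i⟩ : V)) = u := rfl
    have hliV : LinearIndependent ℂ (fun i : t => (⟨u i, humem i⟩ : V)) :=
      LinearIndependent.of_comp V.subtype (hcomp.symm ▸ hli)
    have := hliV.fintype_card_le_finrank
    calc t.card = Fintype.card t := (Fintype.card_coe t).symm
      _ ≤ Module.finrank ℂ V := this
      _ ≤ n := hVrank
  have hfin : s.Finite := by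
    by_contra hinf
    obtain ⟨t, hts, htc⟩ := Set.Infinite.exists_subset_card_eq
      hinf (n + 1)
    have := key t hts
    omega
  refine ⟨hfin, ?_⟩
  rw [Set.ncard_eq_toFinset_card s hfin]
  exact key hfin.toFinset (by simp)
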